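/- arXiv:1801.02771 — 9 statements merged into one kernel-verified Lean document; each statement's English description precedes it below -/
import Mathlib

section
/- For every real number φ, applying the oracle call followed by the inversion about the mean rotates the state by 2θ in the plane spanned by ã and t: U_S (U_A (sin(φ) • ã + cos(φ) • t)) = sin(φ + 2θ) • ã + cos(φ + 2θ) • t. -/
open scoped BigOperators

lemma grover_inner_sum {n : ℕ} (B C : Finset (Fin n)) :
    (inner ℂ (∑ i ∈ B, EuclideanSpace.single i (1:ℂ)) (∑ j ∈ C, EuclideanSpace.single j (1:ℂ)) : ℂ)
    = ((B ∩ C).card : ℂ) := by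
  rw [sum_inner]
  have : ∀ i : Fin n, (inner ℂ (EuclideanSpace.single i (1:ℂ))
      (∑ j ∈ C, EuclideanSpace.single j (1:ℂ)) : ℂ) = if i ∈ C then 1 else 0 := by
    intro i
    rw [inner_sum]
    simp [EuclideanSpace.inner_single_left, EuclideanSpace.single_apply, Finset.sum_ite_eq' C i]
  simp only [this]
  rw [Finset.sum_ite_mem]
  simp [Finset.inter_comm]

/-- Grover rotation step: applying the oracle call `UA` followed by the inversion about
the mean `US` rotates the state by `2θ` in the plane spanned by `a` (the uniform
superposition over marked indices) and `t` (the uniform superposition over unmarked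
indices). -/
theorem grover_rotation_step
    (n : ℕ) (hn : 1 ≤ n) (A : Finset (Fin n)) (k : ℕ) (hk : k = A.card)
    (hk0 : 0 < k) (hkn : k < n)
    (θ : ℝ) (hθ0 : 0 < θ) (hθ1 : θ < Real.pi / 2)
    (hsinθ : Real.sin θ = Real.sqrt ((k : ℝ) / (n : ℝ)))
    (s a t : EuclideanSpace ℂ (Fin n))
    (hs : s = ((Real.sqrt (n : ℝ) : ℝ) : ℂ)⁻¹ •
      ∑ i : Fin n, EuclideanSpace.single i (1 : ℂ))
    (ha : a = ((Real.sqrt (k : ℝ) : ℝ) : ℂ)⁻¹ •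
      ∑ i ∈ A, EuclideanSpace.single i (1 : ℂ))
    (ht : t = ((Real.sqrt ((n : ℝ) - (k : ℝ)) : ℝ) : ℂ)⁻¹ •
      ∑ i ∈ Aᶜ, EuclideanSpace.single i (1 : ℂ))
    (UA US : Module.End ℂ (EuclideanSpace ℂ (Fin n)))
    (hUA : ∀ i : Fin n, UA (EuclideanSpace.single i (1 : ℂ)) =
      if i ∈ A then -(EuclideanSpace.single i (1 : ℂ)) else EuclideanSpace.single i (1 : ℂ))
    (hUS : ∀ v : EuclideanSpace ℂ (Fin n), US v = (2 * (inner ℂ s v : ℂ)) • s - v) :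
    ∀ φ : ℝ,
      US (UA (((Real.sin φ : ℝ) : ℂ) • a + ((Real.cos φ : ℝ) : ℂ) • t)) =
        ((Real.sin (φ + 2 * θ) : ℝ) : ℂ) • a + ((Real.cos (φ + 2 * θ) : ℝ) : ℂ) • t := by
  intro φ
  have hnpos : (0:ℝ) < (n:ℝ) := by exact_mod_cast hk0.trans hkn
  have hkpos : (0:ℝ) < (k:ℝ) := by exact_mod_cast hk0
  have hnk : (0:ℝ) < (n:ℝ) - (k:ℝ) := by
    have : (k:ℝ) < (n:ℝ) := by exact_mod_cast hkn
    linarith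
  have hsqn : Real.sqrt (n:ℝ) ≠ 0 := ne_of_gt (Real.sqrt_pos.2 hnpos)
  have hsqk : Real.sqrt (k:ℝ) ≠ 0 := ne_of_gt (Real.sqrt_pos.2 hkpos)
  have hsqnk : Real.sqrt ((n:ℝ) - (k:ℝ)) ≠ 0 := ne_of_gt (Real.sqrt_pos.2 hnk)
  -- cos θ
  have hcosθ : Real.cos θ = Real.sqrt (((n:ℝ) - (k:ℝ)) / (n:ℝ)) := by
    have h1 : Real.cos θ ^ 2 = ((n:ℝ) - (k:ℝ)) / (n:ℝ) := by
      have h2 := Real.sin_sq_add_cos_sq θ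
      rw [hsinθ, Real.sq_sqrt (by positivity : (0:ℝ) ≤ (k:ℝ)/(n:ℝ))] at h2
      field_simp at h2 ⊢
      linarith
    have hc : 0 ≤ Real.cos θ := Real.cos_nonneg_of_mem_Icc
      ⟨by linarith [Real.pi_pos], le_of_lt hθ1⟩
    rw [← Real.sqrt_sq hc, h1]
  -- UA on a and t
  have hUAa : UA a = -a := by
    rw [ha, map_smul, map_sum]
    rw [Finset.sum_congr rfl (fun i hi => by rw [hUA i, if_pos hi])]
    simp
  have hUAt : UA t = t := by
    rw [ht, map_smul, map_sum]
    rw [Finset.sum_congr rfl (fun i hi => by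
      rw [hUA i, if_neg (Finset.mem_compl.mp hi)])]
  -- s as combination of a and t
  have e1 : ((Real.sqrt ((k:ℝ)/(n:ℝ)) : ℝ) : ℂ) * ((Real.sqrt (k:ℝ) : ℝ) : ℂ)⁻¹
      = ((Real.sqrt (n:ℝ) : ℝ) : ℂ)⁻¹ := by
    have hr : Real.sqrt ((k:ℝ)/(n:ℝ)) * (Real.sqrt (k:ℝ))⁻¹ = (Real.sqrt (n:ℝ))⁻¹ := by
      rw [Real.sqrt_div hkpos.le]
      field_simp
    rw [← Complex.ofReal_inv, ← Complex.ofReal_mul, hr, Complex.ofReal_inv]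
  have e2 : ((Real.sqrt (((n:ℝ)-(k:ℝ))/(n:ℝ)) : ℝ) : ℂ) * ((Real.sqrt ((n:ℝ)-(k:ℝ)) : ℝ) : ℂ)⁻¹
      = ((Real.sqrt (n:ℝ) : ℝ) : ℂ)⁻¹ := by
    have hr : Real.sqrt (((n:ℝ)-(k:ℝ))/(n:ℝ)) * (Real.sqrt ((n:ℝ)-(k:ℝ)))⁻¹
        = (Real.sqrt (n:ℝ))⁻¹ := by
      rw [Real.sqrt_div hnk.le]
      field_simp
    rw [← Complex.ofReal_inv, ← Complex.ofReal_mul, hr, Complex.ofReal_inv]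
  have hsθ : s = ((Real.sin θ : ℝ) : ℂ) • a + ((Real.cos θ : ℝ) : ℂ) • t := by
    rw [hs, ha, ht, hsinθ, hcosθ, smul_smul, smul_smul, e1, e2, ← smul_add,
      Finset.sum_add_sum_compl A]
  -- inner products
  have iaa : (inner ℂ a a : ℂ) = 1 := by
    rw [ha, inner_smul_left, inner_smul_right, grover_inner_sum, Finset.inter_self, ← hk]
    simp only [map_inv₀, Complex.conj_ofReal]
    rw [← Complex.ofReal_natCast, ← Complex.ofReal_inv, ← Complex.ofReal_mul,
      ← Complex.ofReal_mul, ← Complex.ofReal_one]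
    congr 1
    rw [← Real.sqrt_mul_self hkpos.le]
    field_simp
    rw [Real.sq_sqrt (Real.sqrt_nonneg _)]
  have itt : (inner ℂ t t : ℂ) = 1 := by
    rw [ht, inner_smul_left, inner_smul_right, grover_inner_sum, Finset.inter_self]
    have hcard : ((Aᶜ : Finset (Fin n)).card : ℂ) = (((n:ℝ) - (k:ℝ) : ℝ) : ℂ) := by
      rw [Finset.card_compl, Fintype.card_fin, ← hk]
      push_cast [Nat.cast_sub hkn.le]
      ring
    rw [hcard]
    simp only [map_inv₀, Complex.conj_ofReal]
    rw [← Complex.ofReal_inv, ← Complex.ofReal_mul,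
      ← Complex.ofReal_mul, ← Complex.ofReal_one]
    congr 1
    rw [← Real.sqrt_mul_self hnk.le]
    field_simp
    rw [Real.sq_sqrt (Real.sqrt_nonneg _)]
  have iat : (inner ℂ a t : ℂ) = 0 := by
    rw [ha, ht, inner_smul_left, inner_smul_right, grover_inner_sum]
    simp
  have ita : (inner ℂ t a : ℂ) = 0 := by
    rw [ha, ht, inner_smul_left, inner_smul_right, grover_inner_sum]
    simp [Finset.inter_comm Aᶜ A]
  -- the vector after the oracle
  set v : EuclideanSpace ℂ (Fin n) :=
    (-(Real.sin φ : ℝ) : ℂ) • a + ((Real.cos φ : ℝ) : ℂ) • t with hv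
  have hUAv : UA (((Real.sin φ : ℝ) : ℂ) • a + ((Real.cos φ : ℝ) : ℂ) • t) = v := by
    rw [map_add, map_smul, map_smul, hUAa, hUAt, hv]
    push_cast
    module
  have hinner : (inner ℂ s v : ℂ) = ((Real.cos (φ + θ) : ℝ) : ℂ) := by
    rw [hsθ, hv]
    simp only [inner_add_left, inner_add_right, inner_smul_left, inner_smul_right,
      iaa, itt, iat, ita, Complex.conj_ofReal, map_neg]
    rw [Real.cos_add]
    push_cast
    ring
  rw [hUAv, hUS v, hinner, hsθ, hv]
  -- trig identities
  have key1 : Real.sin (φ + 2*θ) = 2 * Real.cos (φ + θ) * Real.sin θ + Real.sin φ := by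
    have h2 : (2:ℝ)*θ = θ + θ := by ring
    rw [h2, ← add_assoc, Real.sin_add (φ+θ), Real.cos_add φ θ, Real.sin_add φ θ]
    linear_combination (Real.sin φ) * (Real.sin_sq_add_cos_sq θ)
  have key2 : Real.cos (φ + 2*θ) = 2 * Real.cos (φ + θ) * Real.cos θ - Real.cos φ := by
    have h2 : (2:ℝ)*θ = θ + θ := by ring
    rw [h2, ← add_assoc, Real.cos_add (φ+θ), Real.cos_add φ θ, Real.sin_add φ θ]
    linear_combination (-Real.cos φ) * (Real.sin_sq_add_cos_sq θ)
  have key1c : ((Real.sin (φ + 2*θ) : ℝ) : ℂ)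
      = 2 * ((Real.cos (φ+θ) : ℝ) : ℂ) * ((Real.sin θ : ℝ) : ℂ) + ((Real.sin φ : ℝ) : ℂ) := by
    rw [← Complex.ofReal_ofNat]
    push_cast [key1]
    ring
  have key2c : ((Real.cos (φ + 2*θ) : ℝ) : ℂ)
      = 2 * ((Real.cos (φ+θ) : ℝ) : ℂ) * ((Real.cos θ : ℝ) : ℂ) - ((Real.cos φ : ℝ) : ℂ) := by
    push_cast [key2]
    ring
  rw [key1c, key2c]
  module
end

section
/- Let θ be a real number with 0 < θ ≤ π/2 and let r = ⌊π/(4θ)⌋ (the floor, a natural number). Then cos((2r+1)θ)² ≤ sin(θ)². -/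
/-- Boyer–Brassard–Høyer–Tapp choice of Grover iteration number: with
`r = ⌊π/(4θ)⌋` iterations, `cos((2r+1)θ)² ≤ sin(θ)²`. -/
theorem grover_iteration_number_bound (θ : ℝ) (hθ0 : 0 < θ) (hθ1 : θ ≤ Real.pi / 2) :
    Real.cos ((2 * (⌊Real.pi / (4 * θ)⌋₊ : ℝ) + 1) * θ) ^ 2 ≤ Real.sin θ ^ 2 := by
  set r : ℝ := (⌊Real.pi / (4 * θ)⌋₊ : ℝ) with hr
  have h4θ : (0:ℝ) < 4 * θ := by linarith
  have hr0 : 0 ≤ r := Nat.cast_nonneg _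
  have hr1 : r ≤ Real.pi / (4 * θ) := Nat.floor_le (by positivity)
  have hr2 : Real.pi / (4 * θ) - 1 < r := Nat.sub_one_lt_floor _
  have hx1 : (2 * r + 1) * θ ≤ Real.pi / 2 + θ := by
    have h := (le_div_iff₀ h4θ).mp hr1
    nlinarith
  have hx2 : Real.pi / 2 - θ < (2 * r + 1) * θ := by
    have h := (div_lt_iff₀ h4θ).mp (by linarith : Real.pi / (4 * θ) < r + 1)
    nlinarith
  set x : ℝ := (2 * r + 1) * θ
  have hcos : Real.cos x = Real.sin (Real.pi / 2 - x) := (Real.sin_pi_div_two_sub x).symm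
  have hmem1 : Real.pi / 2 - x ∈ Set.Icc (-(Real.pi/2)) (Real.pi/2) := by
    constructor <;> [linarith; linarith]
  have hmem2 : θ ∈ Set.Icc (-(Real.pi/2)) (Real.pi/2) := by
    constructor <;> linarith
  have hmem3 : -θ ∈ Set.Icc (-(Real.pi/2)) (Real.pi/2) := by
    constructor <;> linarith
  have hupper : Real.sin (Real.pi / 2 - x) ≤ Real.sin θ :=
    Real.strictMonoOn_sin.monotoneOn hmem1 hmem2 (by linarith)
  have hlower : Real.sin (-θ) ≤ Real.sin (Real.pi / 2 - x) :=
    Real.strictMonoOn_sin.monotoneOn hmem3 hmem1 (by linarith)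
  rw [Real.sin_neg] at hlower
  rw [hcos] at *
  exact sq_le_sq' hlower hupper
end

section
/- With the Grover iteration number r = ⌊π/(4θ)⌋, the total squared amplitude of the state (U_S ∘ U_A)^r s on the indices outside A is at most k/n; that is, ∑_{i ∉ A} |((U_S ∘ U_A)^r s)_i|² ≤ k/n. -/
open scoped BigOperators

private lemma grover_trig_cos (α θ : ℝ) :
    Real.cos (α + 2 * θ) =
      2 * (Real.cos α * Real.cos θ - Real.sin α * Real.sin θ) * Real.cos θ - Real.cos α := by
  have h := Real.sin_sq_add_cos_sq θ
  rw [show α + 2 * θ = (α + θ) + θ by ring, Real.cos_add, Real.cos_add, Real.sin_add]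
  linear_combination (-Real.cos α) * h

private lemma grover_trig_sin (α θ : ℝ) :
    Real.sin (α + 2 * θ) =
      2 * (Real.cos α * Real.cos θ - Real.sin α * Real.sin θ) * Real.sin θ + Real.sin α := by
  have h := Real.sin_sq_add_cos_sq θ
  rw [show α + 2 * θ = (α + θ) + θ by ring, Real.sin_add, Real.cos_add, Real.sin_add]
  linear_combination (Real.sin α) * h

set_option maxHeartbeats 1000000 in
/-- With the Grover iteration number `r = ⌊π/(4θ)⌋`, the total squared amplitude of the
state `(U_S ∘ U_A)^r s` on the indices outside the marked set `A` is at most `k/n`. -/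
theorem grover_final_unmarked_mass
    (n : ℕ) (hn : 1 ≤ n) (A : Finset (Fin n)) (k : ℕ) (hk : k = A.card)
    (hk0 : 0 < k) (hkn : k < n)
    (θ : ℝ) (hθ0 : 0 < θ) (hθ1 : θ < Real.pi / 2)
    (hsinθ : Real.sin θ = Real.sqrt ((k : ℝ) / (n : ℝ)))
    (s a t : EuclideanSpace ℂ (Fin n))
    (hs : s = ((Real.sqrt (n : ℝ) : ℝ) : ℂ)⁻¹ •
      ∑ i : Fin n, EuclideanSpace.single i (1 : ℂ))
    (ha : a = ((Real.sqrt (k : ℝ) : ℝ) : ℂ)⁻¹ •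
      ∑ i ∈ A, EuclideanSpace.single i (1 : ℂ))
    (ht : t = ((Real.sqrt ((n : ℝ) - (k : ℝ)) : ℝ) : ℂ)⁻¹ •
      ∑ i ∈ Aᶜ, EuclideanSpace.single i (1 : ℂ))
    (UA US : Module.End ℂ (EuclideanSpace ℂ (Fin n)))
    (hUA : ∀ i : Fin n, UA (EuclideanSpace.single i (1 : ℂ)) =
      if i ∈ A then -(EuclideanSpace.single i (1 : ℂ)) else EuclideanSpace.single i (1 : ℂ))
    (hUS : ∀ v : EuclideanSpace ℂ (Fin n), US v = (2 * (inner ℂ s v : ℂ)) • s - v)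
    (r : ℕ) (hr : r = ⌊Real.pi / (4 * θ)⌋₊) :
    ∑ i ∈ Aᶜ, ‖(((US * UA) ^ r) s) i‖ ^ 2 ≤ (k : ℝ) / (n : ℝ) := by
  -- numeric facts
  have hn0 : (0:ℝ) < n := by exact_mod_cast hn
  have hk0' : (0:ℝ) < k := by exact_mod_cast hk0
  have hnk0 : (0:ℝ) < (n:ℝ) - k := by
    have : (k:ℝ) < n := by exact_mod_cast hkn
    linarith
  have hsqrtn : (0:ℝ) < Real.sqrt n := Real.sqrt_pos.mpr hn0
  have hsqrtk : (0:ℝ) < Real.sqrt k := Real.sqrt_pos.mpr hk0'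
  have hsqrtnk : (0:ℝ) < Real.sqrt ((n:ℝ) - k) := Real.sqrt_pos.mpr hnk0
  have hcosθ : Real.cos θ = Real.sqrt (((n:ℝ) - k) / n) := by
    have h1 : Real.cos θ = Real.sqrt (1 - Real.sin θ ^ 2) :=
      Real.cos_eq_sqrt_one_sub_sin_sq (by linarith [Real.pi_pos]) (le_of_lt hθ1)
    rw [h1, hsinθ, Real.sq_sqrt (by positivity)]
    congr 1
    field_simp
  -- coordinates
  have hsumapp : ∀ (B : Finset (Fin n)) (j : Fin n),
      (∑ i ∈ B, EuclideanSpace.single i (1 : ℂ)) j = if j ∈ B then 1 else 0 := by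
    intro B j
    classical
    rw [WithLp.ofLp_sum, Finset.sum_apply]
    simp [EuclideanSpace.single_apply]
  have hsj : ∀ j, s j = ((Real.sqrt n : ℝ) : ℂ)⁻¹ := by
    intro j; rw [hs]; simp [PiLp.smul_apply, hsumapp, smul_eq_mul]
  have htj : ∀ j, t j = if j ∈ A then 0 else ((Real.sqrt ((n:ℝ) - k) : ℝ) : ℂ)⁻¹ := by
    intro j; rw [ht]
    simp only [PiLp.smul_apply, hsumapp, Finset.mem_compl, smul_eq_mul]
    by_cases hj : j ∈ A <;> simp [hj]
  have haj : ∀ j, a j = if j ∈ A then ((Real.sqrt k : ℝ) : ℂ)⁻¹ else 0 := by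
    intro j; rw [ha]
    simp only [PiLp.smul_apply, hsumapp, smul_eq_mul]
    by_cases hj : j ∈ A <;> simp [hj]
  -- real auxiliary identities
  have hb1 : Real.sin θ * (Real.sqrt k)⁻¹ = (Real.sqrt n)⁻¹ := by
    rw [hsinθ, Real.sqrt_div (le_of_lt hk0') (n:ℝ)]
    field_simp
  have hb2 : Real.cos θ * (Real.sqrt ((n:ℝ) - k))⁻¹ = (Real.sqrt n)⁻¹ := by
    rw [hcosθ, Real.sqrt_div (le_of_lt hnk0) (n:ℝ)]
    field_simp
  -- base decomposition
  have hbase : s = ((Real.cos θ : ℝ) : ℂ) • t + ((Real.sin θ : ℝ) : ℂ) • a := by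
    ext j
    rw [PiLp.add_apply, PiLp.smul_apply, PiLp.smul_apply, hsj j, htj j, haj j]
    by_cases hj : j ∈ A
    · rw [if_pos hj, if_pos hj]
      simp only [smul_eq_mul, mul_zero, zero_add]
      rw [show ((Real.sqrt k : ℝ) : ℂ)⁻¹ = (((Real.sqrt k)⁻¹ : ℝ) : ℂ) by push_cast; ring,
        ← Complex.ofReal_mul, hb1]
      push_cast; ring
    · rw [if_neg hj, if_neg hj]
      simp only [smul_eq_mul, mul_zero, add_zero]
      rw [show ((Real.sqrt ((n:ℝ) - k) : ℝ) : ℂ)⁻¹ = (((Real.sqrt ((n:ℝ)-k))⁻¹ : ℝ) : ℂ) by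
          push_cast; ring,
        ← Complex.ofReal_mul, hb2]
      push_cast; ring
  -- inner products
  have hr1 : (k:ℝ) * ((Real.sqrt n)⁻¹ * (Real.sqrt k)⁻¹) = Real.sin θ := by
    rw [hsinθ, Real.sqrt_div (le_of_lt hk0') (n:ℝ)]
    field_simp
    nlinarith [Real.mul_self_sqrt (le_of_lt hk0')]
  have hr2 : ((n:ℝ) - k) * ((Real.sqrt n)⁻¹ * (Real.sqrt ((n:ℝ) - k))⁻¹) = Real.cos θ := by
    rw [hcosθ, Real.sqrt_div (le_of_lt hnk0) (n:ℝ)]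
    field_simp
    nlinarith [Real.mul_self_sqrt (le_of_lt hnk0)]
  have hfA : Finset.filter (fun x => x ∈ A) Finset.univ = A := by ext x; simp
  have hfA' : Finset.filter (fun x => x ∉ A) Finset.univ = Aᶜ := by ext x; simp
  have hst : (inner ℂ s t : ℂ) = ((Real.cos θ : ℝ) : ℂ) := by
    classical
    rw [PiLp.inner_apply]
    simp only [RCLike.inner_apply', hsj, htj, map_inv₀, Complex.conj_ofReal, mul_ite, mul_zero]
    rw [Finset.sum_ite, Finset.sum_const, Finset.sum_const]
    rw [hfA, hfA', smul_zero, zero_add, Finset.card_compl, ← hk, nsmul_eq_mul]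
    have hcast : ((Fintype.card (Fin n) - k : ℕ) : ℂ) = (((n:ℝ) - (k:ℝ) : ℝ) : ℂ) := by
      rw [Fintype.card_fin, Nat.cast_sub (le_of_lt hkn)]; push_cast; ring
    rw [hcast]
    rw [show ((Real.sqrt (n:ℝ) : ℝ) : ℂ)⁻¹ * ((Real.sqrt ((n:ℝ) - k) : ℝ) : ℂ)⁻¹
        = ((((Real.sqrt (n:ℝ))⁻¹ * (Real.sqrt ((n:ℝ) - k))⁻¹ : ℝ)) : ℂ) by push_cast; ring]
    rw [← Complex.ofReal_mul, hr2]
  have hsa : (inner ℂ s a : ℂ) = ((Real.sin θ : ℝ) : ℂ) := by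
    classical
    rw [PiLp.inner_apply]
    simp only [RCLike.inner_apply', hsj, haj, map_inv₀, Complex.conj_ofReal, mul_ite, mul_zero]
    rw [Finset.sum_ite, Finset.sum_const, Finset.sum_const]
    rw [hfA, hfA', smul_zero, add_zero, ← hk, nsmul_eq_mul]
    rw [show ((Real.sqrt (n:ℝ) : ℝ) : ℂ)⁻¹ * ((Real.sqrt (k:ℝ) : ℝ) : ℂ)⁻¹
        = ((((Real.sqrt (n:ℝ))⁻¹ * (Real.sqrt (k:ℝ))⁻¹ : ℝ)) : ℂ) by push_cast; ring]
    rw [show ((k:ℕ):ℂ) = (((k:ℝ):ℝ):ℂ) by push_cast; ring]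
    rw [← Complex.ofReal_mul, hr1]
  -- oracle action
  have hUAt : UA t = t := by
    rw [ht, map_smul, map_sum]
    congr 1
    refine Finset.sum_congr rfl ?_
    intro i hi
    rw [hUA i, if_neg (Finset.mem_compl.mp hi)]
  have hUAa : UA a = -a := by
    rw [ha, map_smul, map_sum]
    rw [show ∑ i ∈ A, UA (EuclideanSpace.single i (1:ℂ))
        = ∑ i ∈ A, -(EuclideanSpace.single i (1:ℂ)) from
      Finset.sum_congr rfl fun i hi => by rw [hUA i, if_pos hi]]
    simp [Finset.sum_neg_distrib]
  -- one Grover step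
  have key : ∀ α : ℝ,
      (US * UA) (((Real.cos α : ℝ) : ℂ) • t + ((Real.sin α : ℝ) : ℂ) • a)
        = ((Real.cos (α + 2*θ) : ℝ) : ℂ) • t + ((Real.sin (α + 2*θ) : ℝ) : ℂ) • a := by
    intro α
    rw [Module.End.mul_apply, map_add, map_smul, map_smul, hUAt, hUAa, hUS]
    rw [inner_add_right, inner_smul_right, inner_smul_right, inner_neg_right, hst, hsa]
    rw [hbase]
    have e1 : ((Real.cos (α + 2*θ) : ℝ) : ℂ)
        = 2 * ((Real.cos α : ℝ) * (Real.cos θ : ℝ)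
            + (Real.sin α : ℝ) * -((Real.sin θ : ℝ) : ℂ)) * (Real.cos θ : ℝ)
          - (Real.cos α : ℝ) := by
      rw [congrArg (Complex.ofReal) (show Real.cos (α + 2*θ) = 2 * (Real.cos α * Real.cos θ + Real.sin α * -Real.sin θ) * Real.cos θ - Real.cos α by rw [grover_trig_cos α θ]; ring)]
      push_cast; ring
    have e2 : ((Real.sin (α + 2*θ) : ℝ) : ℂ)
        = 2 * ((Real.cos α : ℝ) * (Real.cos θ : ℝ)
            + (Real.sin α : ℝ) * -((Real.sin θ : ℝ) : ℂ)) * (Real.sin θ : ℝ)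
          + (Real.sin α : ℝ) := by
      rw [congrArg (Complex.ofReal) (show Real.sin (α + 2*θ) = 2 * (Real.cos α * Real.cos θ + Real.sin α * -Real.sin θ) * Real.sin θ + Real.sin α by rw [grover_trig_sin α θ]; ring)]
      push_cast; ring
    rw [e1, e2]
    module
  -- iteration
  have hiter : ∀ m : ℕ, ((US * UA) ^ m) s
      = ((Real.cos ((2*m+1)*θ) : ℝ) : ℂ) • t + ((Real.sin ((2*m+1)*θ) : ℝ) : ℂ) • a := by
    intro m
    induction m with
    | zero => simpa using hbase
    | succ m ih =>
        rw [pow_succ', Module.End.mul_apply, ih, key ((2*m+1)*θ)]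
        have hang : (2*(m:ℝ)+1)*θ + 2*θ = (2*(((m+1):ℕ):ℝ)+1)*θ := by push_cast; ring
        rw [hang]
  -- angle bounds
  set β : ℝ := (2*r+1)*θ with hβ
  have hβub : β ≤ Real.pi / 2 + θ := by
    have h1 : (r:ℝ) ≤ Real.pi / (4*θ) := by
      rw [hr]; exact Nat.floor_le (by positivity)
    have h2 : (r:ℝ) * θ ≤ Real.pi / 4 := by
      rw [le_div_iff₀ (by positivity)] at h1
      nlinarith
    rw [hβ]; nlinarith
  have hβlb : Real.pi / 2 - θ ≤ β := by
    have h1 : Real.pi / (4*θ) < (r:ℝ) + 1 := by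
      rw [hr]; exact Nat.lt_floor_add_one _
    have h2 : Real.pi / 4 < ((r:ℝ) + 1) * θ := by
      rw [div_lt_iff₀ (by positivity)] at h1
      rw [div_lt_iff₀ (by norm_num : (0:ℝ) < 4)]
      nlinarith
    rw [hβ]; nlinarith
  have hβ0 : 0 ≤ β := by rw [hβ]; positivity
  have hβπ : β ≤ Real.pi := by nlinarith [Real.pi_pos]
  have hub : Real.cos β ≤ Real.sin θ := by
    calc Real.cos β ≤ Real.cos (Real.pi/2 - θ) :=
          Real.cos_le_cos_of_nonneg_of_le_pi (by linarith) hβπ hβlb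
      _ = Real.sin θ := Real.cos_pi_div_two_sub θ
  have hlb : -Real.sin θ ≤ Real.cos β := by
    calc -Real.sin θ = Real.cos (Real.pi/2 + θ) := by
          rw [show Real.pi/2 + θ = θ + Real.pi/2 by ring, Real.cos_add_pi_div_two]
      _ ≤ Real.cos β :=
          Real.cos_le_cos_of_nonneg_of_le_pi hβ0 (by nlinarith [Real.pi_pos]) hβub
  have hsq : Real.cos β ^ 2 ≤ (k:ℝ)/n := by
    have h2 : Real.cos β ^ 2 ≤ Real.sin θ ^ 2 := sq_le_sq' hlb hub
    rwa [hsinθ, Real.sq_sqrt (by positivity)] at h2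
  -- compute the sum
  rw [hiter r]
  have hcard : Aᶜ.card = n - k := by
    rw [Finset.card_compl, hk]; simp
  have hterm : ∀ i ∈ Aᶜ, ‖
      ((((Real.cos ((2*r+1)*θ) : ℝ) : ℂ) • t + ((Real.sin ((2*r+1)*θ) : ℝ) : ℂ) • a) i)‖ ^ 2
      = Real.cos β ^ 2 / ((n:ℝ) - k) := by
    intro i hi
    have hiA : i ∉ A := Finset.mem_compl.mp hi
    rw [PiLp.add_apply, PiLp.smul_apply, PiLp.smul_apply, htj i, haj i,
      if_neg hiA, if_neg hiA]
    simp only [smul_eq_mul, mul_zero, add_zero]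
    rw [show ((Real.sqrt ((n:ℝ) - k) : ℝ) : ℂ)⁻¹ = ((Real.sqrt ((n:ℝ) - k))⁻¹ : ℝ) by push_cast; ring]
    rw [← Complex.ofReal_mul, Complex.norm_real, Real.norm_eq_abs]
    rw [← hβ]
    rw [sq_abs, mul_pow, inv_pow, Real.sq_sqrt (le_of_lt hnk0)]
    ring
  rw [Finset.sum_congr rfl hterm, Finset.sum_const, hcard]
  have : ((n - k : ℕ) : ℝ) = (n:ℝ) - k := by
    push_cast [Nat.cast_sub (le_of_lt hkn)]; ring
  rw [nsmul_eq_mul, this]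
  rw [mul_div_cancel₀ _ (ne_of_gt hnk0)]
  exact hsq
end

section
/- For every index i ∈ Fin n, the composite map (U_x ∘ W ∘ V ∘ W ∘ U_x) sends the vector u_i := (1/√2)(e_{(i,false,false)} − e_{(i,false,true)}) to (−1)^{x_i ∧ y_i} · u_i, where (−1)^{x_i ∧ y_i} = −1 if x i = y i = true, and +1 otherwise. In particular, the distributed procedure in which Alice applies U_x, Bob applies W ∘ V ∘ W, and Alice applies U_x again implements the Grover oracle call U_A for the marked set A = {i : x i = true and y i = true} on states of the form |ψ⟩|0⟩|−⟩. -/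
/-- The distributed oracle-call procedure: Alice applies `Ux`, Bob applies `W ∘ V ∘ W`,
and Alice applies `Ux` again. On the vector `u i = (1/√2)(e_{(i,false,false)} −
e_{(i,false,true)})` this composite acts as multiplication by `(−1)^{x i ∧ y i}`, i.e. by
`−1` when `x i = y i = true` and `+1` otherwise, implementing the Grover oracle call for
the marked set `{i : x i = true ∧ y i = true}`. -/
theorem distributed_oracle_call
    (n : ℕ) (hn : 1 ≤ n) (x y : Fin n → Bool)
    (e : Fin n × Bool × Bool → (Fin n × Bool × Bool → ℂ))
    (he : ∀ p, e p = Pi.single p (1 : ℂ))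
    (Ux W V : ((Fin n × Bool × Bool) → ℂ) →ₗ[ℂ] ((Fin n × Bool × Bool) → ℂ))
    (hUx : ∀ (i : Fin n) (z w : Bool), Ux (e (i, z, w)) = e (i, Bool.xor z (x i), w))
    (hW : ∀ (i : Fin n) (z w : Bool), W (e (i, z, w)) = e (i, w, z))
    (hV : ∀ (i : Fin n) (z w : Bool), V (e (i, z, w)) = e (i, Bool.xor z (w && y i), w))
    (u : Fin n → ((Fin n × Bool × Bool) → ℂ))
    (hu : ∀ i, u i = ((Real.sqrt 2 : ℝ) : ℂ)⁻¹ • (e (i, false, false) - e (i, false, true))) :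
    ∀ i : Fin n,
      Ux (W (V (W (Ux (u i))))) = (if x i && y i then (-1 : ℂ) else 1) • u i := by
  intro i
  rcases hx : x i with _ | _ <;> rcases hy : y i with _ | _ <;>
    simp [hu, map_smul, map_sub, hUx, hW, hV, hx, hy, smul_sub, sub_smul, neg_smul,
      smul_smul, neg_sub] <;> abel
end

section
/- Let r be a positive even natural number and set θ = π/(4r). Let U_v and U_0 be the real 2×2 matrices U_v = [[cos 2θ, sin 2θ], [sin 2θ, −cos 2θ]] (reflection about the vector cos θ·e_0 + sin θ·e_1) and U_0 = [[1, 0], [0, −1]] (reflection about e_0). Then (U_0 · U_v)^r applied to the vector (1, 0) equals (0, −1), and U_v^r applied to (1, 0) equals (1, 0). (This is the correctness of the r-round qubit AND protocol of Jain, Radhakrishnan and Sen: on input (1,1) each round applies U_0 U_v and the final state is −|1⟩; on input (1,0) each round applies U_v and the final state is |0⟩.) -/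
open Matrix

private noncomputable def Rot (a : ℝ) : Matrix (Fin 2) (Fin 2) ℝ :=
  !![Real.cos a, Real.sin a; -Real.sin a, Real.cos a]

private lemma Rot_mul (a b : ℝ) : Rot a * Rot b = Rot (a + b) := by
  simp only [Rot]
  ext i j
  fin_cases i <;> fin_cases j <;>
    simp [Matrix.mul_apply, Fin.sum_univ_succ, Real.cos_add, Real.sin_add] <;> ring_nf

private lemma Rot_pow (a : ℝ) (n : ℕ) : Rot a ^ n = Rot (n * a) := by
  induction n with
  | zero =>
      simp [Rot]
      ext i j
      fin_cases i <;> fin_cases j <;> simp [Rot]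
  | succ n ih =>
      rw [pow_succ, ih, Rot_mul]
      congr 1
      push_cast
      ring

/-- Correctness of the `r`-round qubit AND protocol of Jain, Radhakrishnan and Sen: with
`θ = π/(4r)`, `U_v` the reflection about `cos θ·e₀ + sin θ·e₁` and `U₀` the reflection
about `e₀`, on input `(1,1)` the state after `r` rounds is `(U₀·U_v)^r (1,0) = (0,−1)`,
and on input `(1,0)` it is `U_v^r (1,0) = (1,0)` (for `r` even). -/
theorem qubit_AND_protocol_correctness
    (r : ℕ) (hr : 0 < r) (hre : Even r) (θ : ℝ) (hθ : θ = Real.pi / (4 * (r : ℝ)))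
    (Uv U0 : Matrix (Fin 2) (Fin 2) ℝ)
    (hUv : Uv = !![Real.cos (2 * θ), Real.sin (2 * θ);
                   Real.sin (2 * θ), -Real.cos (2 * θ)])
    (hU0 : U0 = !![1, 0; 0, -1]) :
    ((U0 * Uv) ^ r) *ᵥ ![1, 0] = ![0, -1] ∧ (Uv ^ r) *ᵥ ![1, 0] = ![1, 0] := by
  have hr0 : (r : ℝ) ≠ 0 := Nat.cast_ne_zero.mpr hr.ne'
  constructor
  · have h1 : U0 * Uv = Rot (2 * θ) := by
      subst hUv hU0
      ext i j
      fin_cases i <;> fin_cases j <;>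
        simp [Rot, Matrix.mul_apply, Fin.sum_univ_succ]
    have h2 : (r : ℝ) * (2 * θ) = Real.pi / 2 := by
      rw [hθ]; field_simp; ring
    rw [h1, Rot_pow, h2]
    ext i
    fin_cases i <;>
      simp [Rot, Matrix.mulVec, dotProduct, Fin.sum_univ_succ]
  · have h2 : Uv * Uv = 1 := by
      subst hUv
      ext i j
      fin_cases i <;> fin_cases j <;>
        simp [Matrix.mul_apply, Fin.sum_univ_succ, Matrix.one_apply] <;>
        nlinarith [Real.sin_sq_add_cos_sq (2 * θ)]
    obtain ⟨k, hk⟩ := hre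
    have : Uv ^ r = 1 := by
      rw [hk, ← two_mul, pow_mul, pow_two, h2, one_pow]
    rw [this]
    ext i
    fin_cases i <;> simp [Matrix.mulVec, dotProduct, Fin.sum_univ_succ, Matrix.one_apply]
end

section
/- Let m be a natural number and F : Fin m → ℝ with 0 ≤ F i ≤ 1 for all i. Then h((1 − ∏_i F i)/2) ≤ ∑_i h((1 − F i)/2). -/
open scoped BigOperators

open Real in
/-- Tangent line bound for binary entropy at a point `q ∈ (0,1)`. -/
lemma binEntropy_le_tangent {q x : ℝ} (hq0 : 0 < q) (hq1 : q < 1)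
    (hx0 : 0 ≤ x) (hx1 : x ≤ 1) :
    binEntropy x ≤ binEntropy q + (x - q) * (log (1 - q) - log q) := by
  have hconc := Real.strictConcave_binEntropy.concaveOn
  have hmemq : q ∈ Set.Icc (0:ℝ) 1 := ⟨hq0.le, hq1.le⟩
  have hmemx : x ∈ Set.Icc (0:ℝ) 1 := ⟨hx0, hx1⟩
  have hdiff : DifferentiableAt ℝ Real.binEntropy q :=
    Real.differentiableAt_binEntropy hq0.ne' hq1.ne
  rcases lt_trichotomy x q with h | h | h
  · have := hconc.deriv_le_slope hmemx hmemq h hdiff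
    rw [Real.deriv_binEntropy, slope_def_field, le_div_iff₀ (by linarith)] at this
    nlinarith [this]
  · simp [h]
  · have := hconc.slope_le_deriv hmemq hmemx h hdiff
    rw [Real.deriv_binEntropy, slope_def_field, div_le_iff₀ (by linarith)] at this
    nlinarith [this]

open Real in
/-- Subadditivity of binary entropy under binary convolution, ordered case. -/
lemma binEntropy_conv_le_aux {p q : ℝ} (hp0 : 0 ≤ p) (hpq : p ≤ q) (hq : q ≤ 1/2) :
    binEntropy (p + q - 2*p*q) ≤ binEntropy p + binEntropy q := by
  rcases eq_or_lt_of_le hp0 with h | hp0'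
  · have : p = 0 := h.symm
    subst this
    simpa using binEntropy_nonneg (le_refl 0) (by norm_num)
  · have hq0 : 0 < q := lt_of_lt_of_le hp0' hpq
    have hq1 : q < 1 := by linarith
    have hx0 : 0 ≤ p + q - 2*p*q := by nlinarith
    have hx1 : p + q - 2*p*q ≤ 1 := by nlinarith
    have htan := binEntropy_le_tangent hq0 hq1 hx0 hx1
    have hkey : (p + q - 2*p*q - q) * (log (1 - q) - log q) ≤ p * log p⁻¹ := by
      have h1 : p + q - 2*p*q - q = p * (1 - 2*q) := by ring
      rw [h1]
      have hlogq : log q ≤ 0 := log_nonpos hq0.le (by linarith)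
      have hlog1q : log (1 - q) ≤ 0 := log_nonpos (by linarith) (by linarith)
      have hdiffnn : 0 ≤ log (1 - q) - log q := by
        have : log q ≤ log (1 - q) := log_le_log hq0 (by linarith)
        linarith
      have h2 : (1 - 2*q) * (log (1 - q) - log q) ≤ log (1 - q) - log q := by
        nlinarith
      have h3 : log (1 - q) - log q ≤ -log p := by
        have : log p ≤ log q := log_le_log hp0' hpq
        linarith
      have h4 : p * ((1 - 2*q) * (log (1 - q) - log q)) ≤ p * (-log p) := by
        apply mul_le_mul_of_nonneg_left (le_trans h2 h3) hp0'.le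
      calc p * (1 - 2*q) * (log (1 - q) - log q)
          = p * ((1 - 2*q) * (log (1 - q) - log q)) := by ring
        _ ≤ p * (-log p) := h4
        _ = p * log p⁻¹ := by rw [log_inv]
    have hent : p * log p⁻¹ ≤ binEntropy p := by
      rw [Real.binEntropy]
      have : 0 ≤ (1 - p) * log (1 - p)⁻¹ := by
        apply mul_nonneg (by linarith)
        rw [log_inv]
        have : log (1 - p) ≤ 0 := log_nonpos (by linarith) (by linarith)
        linarith
      linarith
    linarith
open Real in
/-- Subadditivity of binary entropy under binary convolution. -/
lemma binEntropy_conv_le {p q : ℝ} (hp0 : 0 ≤ p) (hp : p ≤ 1/2)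
    (hq0 : 0 ≤ q) (hq : q ≤ 1/2) :
    binEntropy (p + q - 2*p*q) ≤ binEntropy p + binEntropy q := by
  rcases le_total p q with h | h
  · exact binEntropy_conv_le_aux hp0 h hq
  · have := binEntropy_conv_le_aux hq0 h hp
    have heq : q + p - 2*q*p = p + q - 2*p*q := by ring
    rw [heq] at this
    linarith

open Real in
lemma binEntropy_mul_overlap {a b : ℝ} (ha0 : 0 ≤ a) (ha1 : a ≤ 1)
    (hb0 : 0 ≤ b) (hb1 : b ≤ 1) :
    binEntropy ((1 - a*b)/2) ≤ binEntropy ((1-a)/2) + binEntropy ((1-b)/2) := by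
  have := binEntropy_conv_le (p := (1-a)/2) (q := (1-b)/2)
    (by linarith) (by linarith) (by linarith) (by linarith)
  have heq : (1-a)/2 + (1-b)/2 - 2*((1-a)/2)*((1-b)/2) = (1 - a*b)/2 := by ring
  rw [heq] at this
  exact this

/-- Subadditivity of the binary entropy of overlaps: for overlaps `F i ∈ [0,1]`,
`h((1 − ∏ᵢ Fᵢ)/2) ≤ ∑ᵢ h((1 − Fᵢ)/2)` where `h` is the binary entropy function. -/
theorem binEntropy_prod_overlap_le_sum
    (m : ℕ) (F : Fin m → ℝ) (hF0 : ∀ i, 0 ≤ F i) (hF1 : ∀ i, F i ≤ 1) :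
    Real.binEntropy ((1 - ∏ i, F i) / 2) ≤ ∑ i, Real.binEntropy ((1 - F i) / 2) := by
  induction m with
  | zero => simp
  | succ n ih =>
    rw [Fin.prod_univ_succ, Fin.sum_univ_succ]
    have hprod0 : 0 ≤ ∏ i : Fin n, F i.succ :=
      Finset.prod_nonneg fun i _ => hF0 _
    have hprod1 : ∏ i : Fin n, F i.succ ≤ 1 :=
      Finset.prod_le_one (fun i _ => hF0 _) (fun i _ => hF1 _)
    calc Real.binEntropy ((1 - F 0 * ∏ i : Fin n, F i.succ) / 2)
        ≤ Real.binEntropy ((1 - F 0)/2)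
            + Real.binEntropy ((1 - ∏ i : Fin n, F i.succ)/2) :=
          binEntropy_mul_overlap (hF0 0) (hF1 0) hprod0 hprod1
      _ ≤ Real.binEntropy ((1 - F 0)/2)
            + ∑ i : Fin n, Real.binEntropy ((1 - F i.succ)/2) := by
          have := ih (fun i => F i.succ) (fun i => hF0 _) (fun i => hF1 _)
          linarith
end

section
/- For all real numbers p and F with 0 ≤ p ≤ 1 and 0 ≤ F ≤ 1, h(1/2 − (1/2)·√(1 − 4p(1−p)(1−F²))) ≤ h((1 − F)/2). -/
/-- The entropy of a mixture with weights `p, 1−p` of two pure states with overlap `F` is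
maximized at `p = 1/2`: `h(1/2 − (1/2)√(1 − 4p(1−p)(1−F²))) ≤ h((1 − F)/2)`. -/
theorem binEntropy_mixture_le
    (p F : ℝ) (hp0 : 0 ≤ p) (hp1 : p ≤ 1) (hF0 : 0 ≤ F) (hF1 : F ≤ 1) :
    Real.binEntropy (1 / 2 - 1 / 2 * Real.sqrt (1 - 4 * p * (1 - p) * (1 - F ^ 2))) ≤
      Real.binEntropy ((1 - F) / 2) := by
  have h1 : (1 : ℝ) - 4 * p * (1 - p) * (1 - F ^ 2) ≤ 1 := by nlinarith [mul_nonneg (mul_nonneg (mul_nonneg (by norm_num : (0:ℝ) ≤ 4) hp0) (by linarith : (0:ℝ) ≤ 1 - p)) (by nlinarith : (0:ℝ) ≤ 1 - F ^ 2)]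
  have h2 : F ^ 2 ≤ 1 - 4 * p * (1 - p) * (1 - F ^ 2) := by nlinarith [mul_nonneg (by nlinarith : (0:ℝ) ≤ 1 - F ^ 2) (sq_nonneg (2*p - 1))]
  have hs1 : Real.sqrt (1 - 4 * p * (1 - p) * (1 - F ^ 2)) ≤ 1 := by
    simpa using Real.sqrt_le_sqrt h1
  have hs2 : F ≤ Real.sqrt (1 - 4 * p * (1 - p) * (1 - F ^ 2)) := by
    calc F = Real.sqrt (F ^ 2) := by rw [Real.sqrt_sq hF0]
    _ ≤ _ := Real.sqrt_le_sqrt h2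
  have := (Real.binEntropy_strictMonoOn.monotoneOn)
    (a := 1 / 2 - 1 / 2 * Real.sqrt (1 - 4 * p * (1 - p) * (1 - F ^ 2)))
    (b := (1 - F) / 2) (Set.mem_Icc.mpr ⟨by linarith, by have := Real.sqrt_nonneg (1 - 4 * p * (1 - p) * (1 - F ^ 2)); linarith⟩)
    (Set.mem_Icc.mpr ⟨by linarith, by norm_num; linarith⟩) (by linarith)
  exact this
end

section
/- Assume additionally that ∑_d q d ≥ 1/n. Then the conditional expectation of the number of intersections given that subsampling found none is small: ∑_{d=0}^{n} d · q d ≤ (∑_{d=0}^{n} q d) · (2n·ln n / s + 2). -/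
open scoped BigOperators

/-- Subsampling bound on the conditional expected number of intersections: if no
intersection was found in a subsample of size `s` (an event of probability `∑ d, q d ≥ 1/n`),
then `∑ d, d·q d ≤ (∑ d, q d)·(2n·ln n/s + 2)`. -/
theorem subsample_conditional_expectation_bound
    (n : ℕ) (hn : 4 ≤ n) (s : ℝ) (hs1 : 8 * Real.log n ≤ s) (hs2 : s ≤ n)
    (p q : ℕ → ℝ)
    (hp0 : ∀ d ∈ Finset.range (n + 1), 0 ≤ p d)
    (hp1 : ∑ d ∈ Finset.range (n + 1), p d = 1)
    (hq0 : ∀ d ∈ Finset.range (n + 1), 0 ≤ q d)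
    (hq1 : ∀ d ∈ Finset.range (n + 1), q d ≤ p d * (1 - (d : ℝ) / n) ^ s)
    (hq : (1 : ℝ) / n ≤ ∑ d ∈ Finset.range (n + 1), q d) :
    ∑ d ∈ Finset.range (n + 1), (d : ℝ) * q d ≤
      (∑ d ∈ Finset.range (n + 1), q d) * (2 * n * Real.log n / s + 2) := by
  have hn4 : (4 : ℝ) ≤ n := by exact_mod_cast hn
  have hnpos : (0 : ℝ) < n := by linarith
  have hlogpos : 0 < Real.log n := Real.log_pos (by linarith)
  have hspos : 0 < s := lt_of_lt_of_le (by linarith) hs1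
  set D : ℝ := 2 * n * Real.log n / s with hD
  have hDnonneg : 0 ≤ D := by positivity
  set Q : ℝ := ∑ d ∈ Finset.range (n + 1), q d with hQ
  have hQpos : 0 < Q := lt_of_lt_of_le (by positivity) hq
  have key : ∀ d ∈ Finset.range (n + 1), (d : ℝ) * q d ≤ D * q d + p d / n := by
    intro d hd
    have hdn : d ≤ n := Nat.lt_succ_iff.mp (Finset.mem_range.mp hd)
    have hdnR : (d : ℝ) ≤ n := by exact_mod_cast hdn
    have hqd := hq0 d hd
    have hpd := hp0 d hd
    by_cases hcase : (d : ℝ) ≤ D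
    · have h1 : (d : ℝ) * q d ≤ D * q d := mul_le_mul_of_nonneg_right hcase hqd
      have h2 : 0 ≤ p d / n := by positivity
      linarith
    · push_neg at hcase
      -- large d : q d ≤ p d / n^2
      have h1 : (1 - (d : ℝ) / n) ^ s ≤ Real.exp (-(s * d / n)) := by
        rcases lt_or_eq_of_le hdnR with hlt | heq
        · have hbpos : 0 < 1 - (d : ℝ) / n := by
            have : (d : ℝ) / n < 1 := (div_lt_one hnpos).mpr hlt
            linarith
          rw [Real.rpow_def_of_pos hbpos]
          apply Real.exp_le_exp.mpr
          have hlog : Real.log (1 - (d : ℝ) / n) ≤ -(d / n) := by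
            have := Real.log_le_sub_one_of_pos hbpos
            linarith
          calc Real.log (1 - (d : ℝ) / n) * s ≤ -((d : ℝ) / n) * s :=
                mul_le_mul_of_nonneg_right hlog hspos.le
            _ = -(s * d / n) := by ring
        · have : 1 - (d : ℝ) / n = 0 := by
            rw [heq, div_self hnpos.ne']; ring
          rw [this, Real.zero_rpow hspos.ne']
          positivity
      have h2 : Real.exp (-(s * d / n)) ≤ 1 / (n : ℝ) ^ 2 := by
        have hsd : 2 * Real.log n < s * d / n := by
          have : 2 * n * Real.log n < s * d := by
            have := (div_lt_iff₀ hspos).mp hcase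
            nlinarith
          rw [lt_div_iff₀ hnpos]; nlinarith
        have hexp : Real.exp (2 * Real.log n) = (n : ℝ) ^ 2 := by
          rw [two_mul, Real.exp_add, Real.exp_log hnpos]; ring
        have h3 : Real.exp (-(s * d / n)) ≤ Real.exp (-(2 * Real.log n)) :=
          Real.exp_le_exp.mpr (by linarith)
        rw [Real.exp_neg, Real.exp_neg, hexp] at h3
        rw [Real.exp_neg, one_div]; exact h3
      have hqle : q d ≤ p d / (n : ℝ) ^ 2 := by
        have := hq1 d hd
        have h4 : p d * (1 - (d : ℝ) / n) ^ s ≤ p d * (1 / (n : ℝ) ^ 2) :=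
          mul_le_mul_of_nonneg_left (le_trans h1 h2) hpd
        calc q d ≤ p d * (1 - (d : ℝ) / n) ^ s := this
          _ ≤ p d * (1 / (n : ℝ) ^ 2) := h4
          _ = p d / (n : ℝ) ^ 2 := by ring
      have h5 : (d : ℝ) * q d ≤ n * q d := mul_le_mul_of_nonneg_right hdnR hqd
      have h6 : (n : ℝ) * q d ≤ n * (p d / (n : ℝ) ^ 2) :=
        mul_le_mul_of_nonneg_left hqle hnpos.le
      have h7 : (n : ℝ) * (p d / (n : ℝ) ^ 2) = p d / n := by
        field_simp
      have h8 : 0 ≤ D * q d := mul_nonneg hDnonneg hqd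
      linarith
  have hsum : ∑ d ∈ Finset.range (n + 1), (d : ℝ) * q d ≤
      D * Q + 1 / n := by
    calc ∑ d ∈ Finset.range (n + 1), (d : ℝ) * q d
        ≤ ∑ d ∈ Finset.range (n + 1), (D * q d + p d / n) :=
          Finset.sum_le_sum key
      _ = D * Q + (∑ d ∈ Finset.range (n + 1), p d) / n := by
          rw [Finset.sum_add_distrib, ← Finset.mul_sum, ← Finset.sum_div]
      _ = D * Q + 1 / n := by rw [hp1]
  have : D * Q + 1 / n ≤ Q * (D + 2) := by nlinarith
  calc ∑ d ∈ Finset.range (n + 1), (d : ℝ) * q d ≤ D * Q + 1 / n := hsum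
    _ ≤ Q * (D + 2) := this
end

section
/- Let μ > 0 and Δ be real numbers with Δ ≥ (e² − 1)·μ. Then for every natural number j, exp(−μ) · (e·μ/(μ + j·Δ))^(μ + j·Δ) ≤ exp(−j·Δ), where the power is the real power x^y = exp(y·ln x). -/
/-- Bound `Pr(E₁ = j) ≤ e^{−jΔ}` in the typical-subspace analysis: once the neighborhood
width satisfies `Δ ≥ (e² − 1)·μ`, the Poisson Chernoff bound value at total photon number
`μ + jΔ` is at most `e^{−jΔ}`. The power is the real power `x^y = exp(y·ln x)`. -/
theorem poisson_chernoff_value_le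
    (μ Δ : ℝ) (hμ : 0 < μ) (hΔ : (Real.exp 1 ^ 2 - 1) * μ ≤ Δ) :
    ∀ j : ℕ,
      Real.exp (-μ) * (Real.exp 1 * μ / (μ + (j : ℝ) * Δ)) ^ (μ + (j : ℝ) * Δ) ≤
        Real.exp (-((j : ℝ) * Δ)) := by
  intro j
  have he : (1:ℝ) < Real.exp 1 := by
    have := Real.exp_one_gt_d9; linarith
  have hΔ0 : 0 ≤ Δ := le_trans (by nlinarith [mul_nonneg (sq_nonneg (Real.exp 1 - 1)) hμ.le, mul_pos (sub_pos.mpr he) hμ]) hΔ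
  rcases Nat.eq_zero_or_pos j with hj | hj
  · subst hj
    simp only [Nat.cast_zero, zero_mul, add_zero, neg_zero, Real.exp_zero]
    rw [mul_div_assoc, div_self hμ.ne', mul_one, Real.exp_one_rpow, ← Real.exp_add]
    simp
  · set s : ℝ := μ + (j : ℝ) * Δ with hs
    have hj1 : (1:ℝ) ≤ (j:ℝ) := by exact_mod_cast hj
    have hjΔ : Δ ≤ (j:ℝ) * Δ := by nlinarith
    have hs2 : Real.exp 1 ^ 2 * μ ≤ s := by nlinarith
    have hspos : 0 < s := lt_of_lt_of_le (by positivity) hs2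
    have hx : 0 < Real.exp 1 * μ / s := by positivity
    rw [Real.rpow_def_of_pos hx, ← Real.exp_add]
    apply Real.exp_le_exp.mpr
    have hle : Real.exp 1 * μ / s ≤ Real.exp (-1) := by
      rw [div_le_iff₀ hspos, Real.exp_neg]
      rw [inv_mul_eq_div, le_div_iff₀ (Real.exp_pos 1)]
      nlinarith [Real.exp_pos 1]
    have hlog : Real.log (Real.exp 1 * μ / s) ≤ -1 := by
      calc Real.log (Real.exp 1 * μ / s) ≤ Real.log (Real.exp (-1)) :=
            Real.log_le_log hx hle
        _ = -1 := Real.log_exp _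
    nlinarith [mul_le_mul_of_nonneg_left hlog hspos.le]
end
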